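/- Let (R, α) be a multiplicative Hom-Lie conformal superalgebra. Then [Der(R)_λ C(R)] ⊆ C(R)[λ]: for any homogeneous D ∈ Der_{α^k}(R) and D' ∈ C_{α^s}(R), the commutator [D_λ D'] is an α^{k+s}-centroid of R with polynomial coefficients in λ. -/

import Mathlib

noncomputable section

namespace HLCS

open scoped BigOperators

/-- Evaluation at `l : ℂ` of a polynomial (in `λ`) with coefficients in `M`,
encoded as a finitely supported family of coefficients. -/
def pev {M : Type} [AddCommGroup M] [Module ℂ M] (l : ℂ) (p : ℕ →₀ M) : M :=
  p.sum fun n r => l ^ n • r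

/-- Evaluation of a polynomial with coefficients in `M` at an operator `T`
(used for substitutions such as `-λ - ∂`). -/
def pevOp {M : Type} [AddCommGroup M] [Module ℂ M] (T : Module.End ℂ M) (p : ℕ →₀ M) : M :=
  p.sum fun n r => (T ^ n) r

/-- The super sign `(-1)^{|a||b|}` attached to parities `i`, `j`. -/
def sg (i j : ZMod 2) : ℂ := (-1 : ℂ) ^ (i * j).val

/-- The data of a `ℤ₂`-graded `ℂ[∂]`-module `R` with an endomorphism `α` and a
`ℂ`-bilinear `λ`-bracket with values in `ℂ[λ] ⊗ R` (encoded by its coefficients). -/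
structure Data (R : Type) [AddCommGroup R] [Module ℂ R] where
  der : Module.End ℂ R
  alpha : Module.End ℂ R
  G : ZMod 2 → Submodule ℂ R
  br : R →ₗ[ℂ] R →ₗ[ℂ] (ℕ →₀ R)

namespace Data

variable {R : Type} [AddCommGroup R] [Module ℂ R] (S : Data R)

/-- `[a_λ b]` evaluated at `λ = l`. -/
def lb (l : ℂ) (a b : R) : R := pev l (S.br a b)

/-- `[a_{-l-∂} b]` : the bracket with `-l - ∂` substituted for `λ`. -/
def lbOp (l : ℂ) (a b : R) : R :=
  pevOp ((-l) • (1 : Module.End ℂ R) - S.der) (S.br a b)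

/-- Multiplicativity: `α [a_λ b] = [α(a)_λ α(b)]`. -/
def Mult : Prop := ∀ (l : ℂ) (a b : R), S.alpha (S.lb l a b) = S.lb l (S.alpha a) (S.alpha b)

end Data

variable {R : Type} [AddCommGroup R] [Module ℂ R]

/-- `(R, α)` with the given data is a Hom-Lie conformal superalgebra.
All polynomial identities in `λ, μ` are stated by evaluating at arbitrary
complex numbers (which is equivalent, `ℂ` being infinite). -/
structure IsHLCS (S : Data R) : Prop where
  internal : DirectSum.IsInternal S.G
  der_even : ∀ i, ∀ a ∈ S.G i, S.der a ∈ S.G i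
  alpha_even : ∀ i, ∀ a ∈ S.G i, S.alpha a ∈ S.G i
  alpha_der : ∀ a, S.alpha (S.der a) = S.der (S.alpha a)
  br_grade : ∀ i j, ∀ a ∈ S.G i, ∀ b ∈ S.G j, ∀ n, S.br a b n ∈ S.G (i + j)
  conf_left : ∀ (l : ℂ) (a b : R), S.lb l (S.der a) b = -l • S.lb l a b
  conf_right : ∀ (l : ℂ) (a b : R), S.lb l a (S.der b) = S.der (S.lb l a b) + l • S.lb l a b
  skew : ∀ i j, ∀ a ∈ S.G i, ∀ b ∈ S.G j, ∀ l : ℂ,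
    S.lb l a b = (-sg i j) • S.lbOp l b a
  jacobi : ∀ i j, ∀ a ∈ S.G i, ∀ b ∈ S.G j, ∀ (c : R) (l m : ℂ),
    S.lb l (S.alpha a) (S.lb m b c) =
      S.lb (l + m) (S.lb l a b) (S.alpha c) + sg i j • S.lb m (S.alpha b) (S.lb l a c)

end HLCS
namespace HLCS

variable {R : Type} [AddCommGroup R] [Module ℂ R]

/-- A homogeneous conformal linear map of parity `d` on `R`, encoded as the family of
its evaluations `F l : R → R` (`l : ℂ`): it is `ℂ`-linear, polynomial in `l`, and
satisfies `F_λ(∂a) = (∂ + λ) F_λ(a)`. -/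
structure IsConfMap (S : Data R) (d : ZMod 2) (F : ℂ → R → R) : Prop where
  map_add : ∀ (l : ℂ) (a b : R), F l (a + b) = F l a + F l b
  map_smul : ∀ (l c : ℂ) (a : R), F l (c • a) = c • F l a
  poly : ∀ a : R, ∃ p : ℕ →₀ R, ∀ l : ℂ, F l a = pev l p
  conf : ∀ (l : ℂ) (a : R), F l (S.der a) = S.der (F l a) + l • F l a
  grade : ∀ i, ∀ a ∈ S.G i, ∀ l : ℂ, F l a ∈ S.G (i + d)

/-- Membership in `Ω`: a homogeneous conformal linear map commuting with `α`. -/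
def InOmega (S : Data R) (d : ZMod 2) (F : ℂ → R → R) : Prop :=
  IsConfMap S d F ∧ ∀ (l : ℂ) (a : R), F l (S.alpha a) = S.alpha (F l a)

/-- An `α^k`-derivation of parity `d`. -/
def IsDer (S : Data R) (k : ℕ) (d : ZMod 2) (F : ℂ → R → R) : Prop :=
  InOmega S d F ∧ ∀ i, ∀ a ∈ S.G i, ∀ (b : R) (l m : ℂ),
    F l (S.lb m a b) =
      S.lb (l + m) (F l a) ((S.alpha ^ k) b) +
        ((-1 : ℂ) ^ ((i * d).val)) • S.lb m ((S.alpha ^ k) a) (F l b)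

/-- The commutator `[D_λ D']_μ (a) = D_λ(D'_{μ-λ}(a)) - (-1)^{|D||D'|} D'_{μ-λ}(D_λ(a))`,
with `e = (-1)^{|D||D'|}`; first argument `l` is `λ`, second `m` is `μ`. -/
def brkt (e : ℂ) (F G : ℂ → R → R) : ℂ → ℂ → R → R :=
  fun l m a => F l (G (m - l) a) - e • G (m - l) (F l a)

/-- The twist `α'(D) = D ∘ α`. -/
def tw (S : Data R) (F : ℂ → R → R) : ℂ → R → R := fun l a => F l (S.alpha a)

/-- A generalized `α^k`-derivation of parity `d`. -/
def IsGDer (S : Data R) (k : ℕ) (d : ZMod 2) (F : ℂ → R → R) : Prop :=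
  InOmega S d F ∧ ∃ F' F'' : ℂ → R → R, InOmega S d F' ∧ InOmega S d F'' ∧
    ∀ i, ∀ a ∈ S.G i, ∀ (b : R) (l m : ℂ),
      S.lb (l + m) (F m a) ((S.alpha ^ k) b) +
        ((-1 : ℂ) ^ ((d * i).val)) • S.lb l ((S.alpha ^ k) a) (F' m b) = F'' m (S.lb l a b)

/-- An `α^k`-quasiderivation of parity `d`. -/
def IsQDer (S : Data R) (k : ℕ) (d : ZMod 2) (F : ℂ → R → R) : Prop :=
  InOmega S d F ∧ ∃ F' : ℂ → R → R, InOmega S d F' ∧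
    ∀ i, ∀ a ∈ S.G i, ∀ (b : R) (l m : ℂ),
      S.lb (l + m) (F m a) ((S.alpha ^ k) b) +
        ((-1 : ℂ) ^ ((d * i).val)) • S.lb l ((S.alpha ^ k) a) (F m b) = F' m (S.lb l a b)

/-- An `α^k`-centroid of parity `d`. -/
def IsCent (S : Data R) (k : ℕ) (d : ZMod 2) (F : ℂ → R → R) : Prop :=
  InOmega S d F ∧ ∀ i, ∀ a ∈ S.G i, ∀ (b : R) (l m : ℂ),
    S.lb (l + m) (F m a) ((S.alpha ^ k) b) =
      ((-1 : ℂ) ^ ((d * i).val)) • S.lb l ((S.alpha ^ k) a) (F m b) ∧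
    S.lb (l + m) (F m a) ((S.alpha ^ k) b) = F m (S.lb l a b)

/-- An `α^k`-quasicentroid of parity `d`. -/
def IsQC (S : Data R) (k : ℕ) (d : ZMod 2) (F : ℂ → R → R) : Prop :=
  InOmega S d F ∧ ∀ i, ∀ a ∈ S.G i, ∀ (b : R) (l m : ℂ),
    S.lb (l + m) (F m a) ((S.alpha ^ k) b) =
      ((-1 : ℂ) ^ ((d * i).val)) • S.lb l ((S.alpha ^ k) a) (F m b)

/-- An `α^k`-central derivation of parity `d`. -/
def IsZDer (S : Data R) (k : ℕ) (d : ZMod 2) (F : ℂ → R → R) : Prop :=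
  InOmega S d F ∧ ∀ (a b : R) (l m : ℂ),
    S.lb (l + m) (F m a) ((S.alpha ^ k) b) = 0 ∧ F m (S.lb l a b) = 0

/-- Membership in the center `Z(R)`. -/
def IsCentral (S : Data R) (x : R) : Prop := ∀ (l : ℂ) (y : R), S.lb l x y = 0

end HLCS
namespace HLCS

variable {R : Type} [AddCommGroup R] [Module ℂ R]


section Aux

variable {R : Type} [AddCommGroup R] [Module ℂ R]

/-- `pev l` as a linear map. -/
def pevL (l : ℂ) : (ℕ →₀ R) →ₗ[ℂ] R := Finsupp.lsum ℂ fun n => l ^ n • (LinearMap.id : R →ₗ[ℂ] R)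

lemma pev_eq_pevL (l : ℂ) (p : ℕ →₀ R) : pev l p = pevL l p := rfl

lemma pev_single (l : ℂ) (n : ℕ) (r : R) : pev l (Finsupp.single n r) = l ^ n • r := by
  simp [pev_eq_pevL, pevL]

lemma pev_add (l : ℂ) (p q : ℕ →₀ R) : pev l (p + q) = pev l p + pev l q := by
  simp [pev_eq_pevL]

lemma pev_shift (l : ℂ) (p : ℕ →₀ R) : ∃ q : ℕ →₀ R, ∀ m : ℂ, pev (m - l) p = pev m q := by
  induction p using Finsupp.induction with
  | zero => exact ⟨0, fun m => by simp [pev_eq_pevL]⟩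
  | single_add n r p hn hr ih =>
    obtain ⟨q, hq⟩ := ih
    refine ⟨(∑ j ∈ Finset.range (n+1),
        Finsupp.single j (((n.choose j : ℂ) * (-l)^(n-j)) • r)) + q, fun m => ?_⟩
    rw [pev_add, pev_single, pev_add, ← hq]
    congr 1
    rw [pev_eq_pevL, map_sum]
    have : ((m - l) ^ n : ℂ) = ∑ j ∈ Finset.range (n+1), m ^ j * (-l)^(n-j) * (n.choose j : ℂ) := by
      rw [show m - l = m + (-l) by ring, add_pow]
    rw [this, Finset.sum_smul]
    refine Finset.sum_congr rfl fun j _ => ?_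
    rw [← pev_eq_pevL, pev_single, smul_smul]
    ring_nf

lemma pev_map (φ : R → R) (hadd : ∀ x y, φ (x + y) = φ x + φ y)
    (hsmul : ∀ (c : ℂ) (x : R), φ (c • x) = c • φ x) (p : ℕ →₀ R) :
    ∃ q : ℕ →₀ R, ∀ m : ℂ, φ (pev m p) = pev m q := by
  have h0 : φ 0 = 0 := by have := hsmul 0 0; simpa using this
  induction p using Finsupp.induction with
  | zero => exact ⟨0, fun m => by simp [pev_eq_pevL, h0]⟩
  | single_add n r p hn hr ih =>
    obtain ⟨q, hq⟩ := ih
    refine ⟨Finsupp.single n (φ r) + q, fun m => ?_⟩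
    rw [pev_add, pev_single, pev_add, pev_single, hadd, hsmul, hq]

/-- `lb` as a bilinear map. -/
def lbL (S : Data R) (l : ℂ) : R →ₗ[ℂ] R →ₗ[ℂ] R := S.br.compr₂ (pevL l)

lemma lb_eq (S : Data R) (l : ℂ) (a b : R) : S.lb l a b = lbL S l a b := rfl

lemma lb_sub_left (S : Data R) (l : ℂ) (a a' b : R) :
    S.lb l (a - a') b = S.lb l a b - S.lb l a' b := by
  simp [lb_eq, map_sub, LinearMap.sub_apply]

lemma lb_smul_left (S : Data R) (l : ℂ) (c : ℂ) (a b : R) :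
    S.lb l (c • a) b = c • S.lb l a b := by
  simp [lb_eq, map_smul, LinearMap.smul_apply]

lemma lb_add_right (S : Data R) (l : ℂ) (a b b' : R) :
    S.lb l a (b + b') = S.lb l a b + S.lb l a b' := by
  simp [lb_eq, map_add]

lemma lb_sub_right (S : Data R) (l : ℂ) (a b b' : R) :
    S.lb l a (b - b') = S.lb l a b - S.lb l a b' := by
  simp [lb_eq, map_sub]

lemma lb_smul_right (S : Data R) (l : ℂ) (c : ℂ) (a b : R) :
    S.lb l a (c • b) = c • S.lb l a b := by
  simp [lb_eq, map_smul]

lemma pow_apply_add (S : Data R) (k s : ℕ) (b : R) :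
    (S.alpha ^ (k + s)) b = (S.alpha ^ k) ((S.alpha ^ s) b) := by
  rw [pow_add]; rfl

lemma pow_apply_add' (S : Data R) (k s : ℕ) (b : R) :
    (S.alpha ^ (k + s)) b = (S.alpha ^ s) ((S.alpha ^ k) b) := by
  rw [add_comm, pow_add]; rfl

lemma commF_pow (S : Data R) (F : ℂ → R → R)
    (h : ∀ (l : ℂ) (a : R), F l (S.alpha a) = S.alpha (F l a)) (t : ℕ) :
    ∀ (l : ℂ) (a : R), F l ((S.alpha ^ t) a) = (S.alpha ^ t) (F l a) := by
  induction t with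
  | zero => intro l a; simp
  | succ t ih =>
    intro l a
    rw [pow_succ, Module.End.mul_apply, ih, h, Module.End.mul_apply]

lemma alpha_pow_mem (S : Data R) (hα : ∀ i, ∀ a ∈ S.G i, S.alpha a ∈ S.G i) (t : ℕ)
    (i : ZMod 2) (a : R) (ha : a ∈ S.G i) : (S.alpha ^ t) a ∈ S.G i := by
  induction t with
  | zero => simpa using ha
  | succ t ih => rw [pow_succ', Module.End.mul_apply]; exact hα _ _ ih

lemma zval2 : ZMod.val (2 : ZMod 2) = 0 := rfl
lemma zval1 : ZMod.val (1 : ZMod 2) = 1 := rfl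

lemma sgn_val_add (x y : ZMod 2) :
    ((-1:ℂ))^((x+y).val) = (-1)^(x.val) * (-1)^(y.val) := by
  fin_cases x <;> fin_cases y <;> simp +decide [ZMod.val]

lemma sq_sgn (x : ZMod 2) : ((-1:ℂ))^(x.val) * (-1)^(x.val) = 1 := by
  fin_cases x <;> simp +decide [ZMod.val]

lemma sgn1 (i d d' : ZMod 2) :
    ((-1:ℂ))^((d'*i).val) = (-1)^((d*d').val) * (-1)^((d'*(i+d)).val) := by
  fin_cases i <;> fin_cases d <;> fin_cases d' <;> simp +decide [ZMod.val]

lemma sgn2 (i d d' : ZMod 2) :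
    ((-1:ℂ))^((d'*i).val) * (-1)^((i*d).val) = (-1)^(((d+d')*i).val) := by
  fin_cases i <;> fin_cases d <;> fin_cases d' <;> simp +decide [ZMod.val]

lemma sgn3 (i d d' : ZMod 2) :
    ((-1:ℂ))^(((i+d')*d).val) * (-1)^((d'*i).val) = (-1)^(((d+d')*i).val) * (-1)^((d*d').val) := by
  fin_cases i <;> fin_cases d <;> fin_cases d' <;> simp +decide [ZMod.val]

lemma sgn4 (i d d' : ZMod 2) :
    ((-1:ℂ))^(((i+d')*d).val) = (-1)^((d*d').val) * (-1)^((i*d).val) := by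
  fin_cases i <;> fin_cases d <;> fin_cases d' <;> simp +decide [ZMod.val]

end Aux

/-- For a multiplicative Hom-Lie conformal superalgebra `(R, α)`,
`[Der(R)_λ C(R)] ⊆ C(R)[λ]`: the commutator of a homogeneous `α^k`-derivation with a
homogeneous `α^s`-centroid is an `α^{k+s}`-centroid (with polynomial coefficients
in `λ`). -/
theorem der_bracket_cent (S : Data R) (hS : IsHLCS S) (hmult : S.Mult)
    (k s : ℕ) (d d' : ZMod 2) (F G : ℂ → R → R)
    (hF : IsDer S k d F) (hG : IsCent S s d' G) :
    ∀ l : ℂ, IsCent S (k + s) (d + d') (brkt ((-1 : ℂ) ^ ((d * d').val)) F G l) := by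
  intro l
  obtain ⟨⟨hFc, hFα⟩, hFd⟩ := hF
  obtain ⟨⟨hGc, hGα⟩, hGcent⟩ := hG
  have hFpow := commF_pow S F hFα
  have hGpow := commF_pow S G hGα
  refine ⟨⟨⟨?_, ?_, ?_, ?_, ?_⟩, ?_⟩, ?_⟩
  · -- map_add
    intro m x y
    simp only [brkt, hFc.map_add, hGc.map_add, smul_add]
    abel
  · -- map_smul
    intro m c x
    simp only [brkt, hFc.map_smul, hGc.map_smul]
    module
  · -- poly
    intro a
    obtain ⟨p, hp⟩ := hGc.poly a
    obtain ⟨p₂, hp₂⟩ := hGc.poly (F l a)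
    obtain ⟨q, hq⟩ := pev_shift l p
    obtain ⟨q₂, hq₂⟩ := pev_shift l p₂
    obtain ⟨q', hq'⟩ := pev_map (F l) (hFc.map_add l) (hFc.map_smul l) q
    refine ⟨q' - ((-1 : ℂ) ^ ((d * d').val)) • q₂, fun m => ?_⟩
    have h1 : F l (G (m - l) a) = pev m q' := by rw [hp, hq, hq']
    have h2 : G (m - l) (F l a) = pev m q₂ := by rw [hp₂, hq₂]
    have h3 : pev m (q' - ((-1 : ℂ) ^ ((d * d').val)) • q₂) = pev m q' - ((-1 : ℂ) ^ ((d * d').val)) • pev m q₂ := by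
      simp [pev_eq_pevL]
    simp only [brkt, h1, h2, h3]
  · -- conf
    intro m a
    simp only [brkt, hGc.conf, hFc.map_add, hFc.map_smul, hFc.conf,
      hGc.map_add, hGc.map_smul, map_sub, map_smul]
    module
  · -- grade
    intro i a ha m
    show F l (G (m - l) a) - ((-1 : ℂ) ^ ((d * d').val)) • G (m - l) (F l a) ∈ S.G (i + (d + d'))
    have h1 : F l (G (m - l) a) ∈ S.G (i + d' + d) :=
      hFc.grade _ _ (hGc.grade i a ha (m - l)) l
    have h2 : G (m - l) (F l a) ∈ S.G (i + d + d') :=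
      hGc.grade _ _ (hFc.grade i a ha l) (m - l)
    rw [show i + (d + d') = i + d' + d from by ring]
    exact sub_mem h1 (Submodule.smul_mem _ _
      (by rwa [show i + d' + d = i + d + d' from by ring]))
  · -- commutes with alpha
    intro m a
    show F l (G (m - l) (S.alpha a)) - ((-1 : ℂ) ^ ((d * d').val)) • G (m - l) (F l (S.alpha a)) =
      S.alpha (F l (G (m - l) a) - ((-1 : ℂ) ^ ((d * d').val)) • G (m - l) (F l a))
    rw [hGα, hFα, hFα, hGα, map_sub, map_smul]
  · -- the centroid identities
    intro i a ha b l' m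
    have hx : G (m - l) a ∈ S.G (i + d') := hGc.grade i a ha (m - l)
    have hy : F l a ∈ S.G (i + d) := hFc.grade i a ha l
    have hak : (S.alpha ^ k) a ∈ S.G i := alpha_pow_mem S hS.alpha_even k i a ha
    have has : (S.alpha ^ s) a ∈ S.G i := alpha_pow_mem S hS.alpha_even s i a ha
    -- derivation applied to x = G (m-l) a
    have hD1 : S.lb (l' + m) (F l (G (m - l) a)) ((S.alpha ^ (k + s)) b)
        = F l (S.lb (l' + (m - l)) (G (m - l) a) ((S.alpha ^ s) b))
          - ((-1:ℂ) ^ (((i + d') * d).val)) •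
            S.lb (l' + (m - l)) (G (m - l) ((S.alpha ^ k) a)) ((S.alpha ^ s) (F l b)) := by
      have h := hFd (i + d') _ hx ((S.alpha ^ s) b) l (l' + (m - l))
      rw [show l + (l' + (m - l)) = l' + m from by ring, ← pow_apply_add,
        hFpow s, ← hGpow k] at h
      rw [h]; abel
    have hC1 := hGcent i a ha b l' (m - l)
    have hC2 := hGcent i _ hak (F l b) l' (m - l)
    have hC3 := hGcent (i + d) _ hy ((S.alpha ^ k) b) (l' + l) (m - l)
    rw [show l' + l + (m - l) = l' + m from by ring, ← pow_apply_add' S k s b] at hC3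
    have hD2 := hFd i _ has (G (m - l) b) l l'
    rw [show l + l' = l' + l from by ring, hFpow s, ← hGpow k, ← pow_apply_add] at hD2
    have hD3 := hFd i a ha b l l'
    rw [show l + l' = l' + l from by ring] at hD3
    have hks : (S.alpha ^ (k + s)) a = (S.alpha ^ s) ((S.alpha ^ k) a) := pow_apply_add' S k s a
    constructor
    · -- first centroid identity
      show S.lb (l' + m) (F l (G (m - l) a) - ((-1 : ℂ) ^ ((d * d').val)) • G (m - l) (F l a)) ((S.alpha ^ (k + s)) b)
        = ((-1:ℂ) ^ (((d + d') * i).val)) • S.lb l' ((S.alpha ^ (k + s)) a)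
            (F l (G (m - l) b) - ((-1 : ℂ) ^ ((d * d').val)) • G (m - l) (F l b))
      rw [lb_sub_left, lb_smul_left, lb_sub_right, lb_smul_right,
        hD1, hC3.1, hC1.1, hC2.1, hFc.map_smul, hD2, hks]
      match_scalars
      · linear_combination sgn1 i d d'
      · linear_combination sgn2 i d d'
      · linear_combination - sgn3 i d d'
    · -- second centroid identity
      show S.lb (l' + m) (F l (G (m - l) a) - ((-1 : ℂ) ^ ((d * d').val)) • G (m - l) (F l a)) ((S.alpha ^ (k + s)) b)
        = F l (G (m - l) (S.lb l' a b)) - ((-1 : ℂ) ^ ((d * d').val)) • G (m - l) (F l (S.lb l' a b))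
      rw [lb_sub_left, lb_smul_left, hD1, hC3.2, hC1.2, hC2.2, hD3,
        hGc.map_add, hGc.map_smul]
      match_scalars
      · ring
      · linear_combination - sgn4 i d d'
      · ring


end HLCS
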